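/- arXiv:2210.15820 — 2 statements merged into one kernel-verified Lean document; each statement's English description precedes it below -/
import Mathlib

section
/- For any density matrix ρ on ℂ^d and any pure-state decomposition ρ = Σ_j p_j |ψ_j⟩⟨ψ_j| (with p_j ≥ 0, Σ_j p_j = 1, ψ_j unit vectors), one has Σ_j p_j |⟨ψ_j*, ψ_j⟩| ≤ √F(ρ, ρᵀ), where √F(ρ,σ) = Tr√(√ρ σ √ρ) is the root fidelity and ρᵀ the transpose. Equivalently, Σ_j p_j (1 − |⟨ψ_j*,ψ_j⟩|)/2 ≥ (1 − √F(ρ,ρᵀ))/2. -/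
open Matrix
open scoped ComplexOrder

/-- Singular values of a complex square matrix: square roots of eigenvalues of `Aᴴ * A`. -/
noncomputable def singularValues {n : Type*} [Fintype n] [DecidableEq n]
    (A : Matrix n n ℂ) : n → ℝ :=
  fun i => Real.sqrt ((Matrix.isHermitian_conjTranspose_mul_self A).eigenvalues i)

/-- Trace norm: sum of singular values. -/
noncomputable def traceNorm {n : Type*} [Fintype n] [DecidableEq n]
    (A : Matrix n n ℂ) : ℝ := ∑ i, singularValues A i

/-- Positive-semidefinite square root (zero for non-PSD input). -/
noncomputable def msqrt {n : Type*} [Fintype n] [DecidableEq n]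
    (A : Matrix n n ℂ) : Matrix n n ℂ :=
  open scoped Classical in
  if h : A.PosSemidef then
    (h.1.eigenvectorUnitary : Matrix n n ℂ) * diagonal ((↑) ∘ Real.sqrt ∘ h.1.eigenvalues) *
      (star h.1.eigenvectorUnitary : Matrix n n ℂ) else 0

/-- Root fidelity √F(ρ,σ) = Tr √(√ρ σ √ρ). -/
noncomputable def rootFid {n : Type*} [Fintype n] [DecidableEq n]
    (ρ σ : Matrix n n ℂ) : ℝ := ((msqrt (msqrt ρ * σ * msqrt ρ)).trace).re

/-- A density matrix: positive semidefinite with unit trace. -/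
def IsDensity {n : Type*} [Fintype n] [DecidableEq n] (ρ : Matrix n n ℂ) : Prop :=
  ρ.PosSemidef ∧ ρ.trace = 1

/-- Partial transpose on the second tensor factor. -/
noncomputable def ptB {dA dB : ℕ} (X : Matrix (Fin dA × Fin dB) (Fin dA × Fin dB) ℂ) :
    Matrix (Fin dA × Fin dB) (Fin dA × Fin dB) ℂ :=
  Matrix.of fun p q => X (p.1, q.2) (q.1, p.2)

/-- Hermitian inner product ⟨x,y⟩ = ∑ conj(xᵢ) yᵢ. -/
noncomputable def hinner {ι : Type*} [Fintype ι] (x y : ι → ℂ) : ℂ := ∑ i, star (x i) * y i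

/-- Entrywise complex conjugate of a vector. -/
noncomputable def cconj {ι : Type*} (x : ι → ℂ) : ι → ℂ := fun i => star (x i)

/-! ### Auxiliary lemmas -/

/-- Cauchy–Schwarz for complex sums. -/
lemma aux_cs_sum {m : Type*} [Fintype m] (a b : m → ℂ) :
    ‖∑ i, star (a i) * b i‖ ≤
      Real.sqrt (∑ i, Complex.normSq (a i)) * Real.sqrt (∑ i, Complex.normSq (b i)) := by
  let x : EuclideanSpace ℂ m := (WithLp.equiv 2 _).symm a
  let y : EuclideanSpace ℂ m := (WithLp.equiv 2 _).symm b
  have h := norm_inner_le_norm (𝕜 := ℂ) x y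
  rw [EuclideanSpace.norm_eq, EuclideanSpace.norm_eq] at h
  have hxy : (inner ℂ x y : ℂ) = ∑ i, star (a i) * b i := by
    rw [PiLp.inner_apply]
    refine Finset.sum_congr rfl fun i _ => ?_
    rw [RCLike.inner_apply, mul_comm]
    rfl
  rw [hxy] at h
  have hxa : ∀ i, ‖x i‖ ^ 2 = Complex.normSq (a i) := fun i => by
    rw [Complex.sq_norm]; rfl
  have hyb : ∀ i, ‖y i‖ ^ 2 = Complex.normSq (b i) := fun i => by
    rw [Complex.sq_norm]; rfl
  simp only [hxa, hyb] at h
  exact h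

lemma aux_star_mul_self_c (z : ℂ) : star z * z = ((Complex.normSq z : ℝ) : ℂ) := by
  rw [Complex.star_def, Complex.normSq_eq_conj_mul_self]

/-- Key bound: the real part of the trace of a square matrix is at most the sum of the
square roots of the eigenvalues of `Xᴴ * X` (i.e. the sum of singular values). -/
lemma aux_retrace_le {n : Type*} [Fintype n] [DecidableEq n] (X : Matrix n n ℂ)
    (h : (Xᴴ * X).PosSemidef) :
    (X.trace).re ≤ ∑ k, Real.sqrt (h.1.eigenvalues k) := by
  set U : Matrix n n ℂ := (h.1.eigenvectorUnitary : Matrix n n ℂ) with hUdef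
  have hU1 : star U * U = 1 := Unitary.coe_star_mul_self h.1.eigenvectorUnitary
  have hU2 : U * star U = 1 := Unitary.coe_mul_star_self h.1.eigenvectorUnitary
  have hdiag : star U * (Xᴴ * X) * U = diagonal (RCLike.ofReal ∘ h.1.eigenvalues) :=
    by have := h.1.conjStarAlgAut_star_eigenvectorUnitary
       rwa [Unitary.conjStarAlgAut_star_apply] at this
  have htr : X.trace = (star U * X * U).trace := by
    rw [trace_mul_comm, ← mul_assoc, hU2, one_mul]
  have hcol : ∀ k, ∑ i, Complex.normSq (U i k) = 1 := by
    intro k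
    have h1 : (∑ i, star (U i k) * U i k) = (1 : ℂ) := by
      have := congrFun (congrFun hU1 k) k
      simpa [mul_apply, star_apply] using this
    rw [Finset.sum_congr rfl (fun i _ => aux_star_mul_self_c (U i k)),
      ← Complex.ofReal_sum] at h1
    exact_mod_cast h1
  have hXU : ∀ k, ∑ i, Complex.normSq ((X * U) i k) = h.1.eigenvalues k := by
    intro k
    have key : (X * U)ᴴ * (X * U) = diagonal (RCLike.ofReal ∘ h.1.eigenvalues) := by
      rw [conjTranspose_mul, ← hdiag, star_eq_conjTranspose]
      simp only [Matrix.mul_assoc]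
    have h1 : ∑ i, star ((X * U) i k) * ((X * U) i k)
        = ((h.1.eigenvalues k : ℝ) : ℂ) := by
      have h0 := congrFun (congrFun key k) k
      rw [mul_apply] at h0
      simp only [conjTranspose_apply, diagonal_apply_eq, Function.comp_apply] at h0
      exact_mod_cast h0
    rw [Finset.sum_congr rfl (fun i _ => aux_star_mul_self_c ((X * U) i k)),
      ← Complex.ofReal_sum] at h1
    exact_mod_cast h1
  have hent : ∀ k, ‖(star U * X * U) k k‖ ≤ Real.sqrt (h.1.eigenvalues k) := by
    intro k
    have he : (star U * X * U) k k = ∑ i, star (U i k) * ((X * U) i k) := by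
      rw [Matrix.mul_assoc, mul_apply]
      exact Finset.sum_congr rfl fun i _ => by rw [star_apply]
    rw [he]
    calc ‖∑ i, star (U i k) * ((X * U) i k)‖
        ≤ Real.sqrt (∑ i, Complex.normSq (U i k)) *
          Real.sqrt (∑ i, Complex.normSq ((X * U) i k)) := aux_cs_sum _ _
      _ = Real.sqrt (h.1.eigenvalues k) := by rw [hcol, hXU, Real.sqrt_one, one_mul]
  rw [htr, trace, Complex.re_sum]
  refine Finset.sum_le_sum fun k _ => ?_
  exact le_trans (Complex.re_le_norm _) (hent k)

/-- Trace of the PSD square root equals the sum of square roots of the eigenvalues. -/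
lemma aux_trace_sqrt {n : Type*} [Fintype n] [DecidableEq n] {H : Matrix n n ℂ}
    (h : H.PosSemidef) :
    ((h.1.eigenvectorUnitary : Matrix n n ℂ) * diagonal (((↑) : ℝ → ℂ) ∘ Real.sqrt ∘ h.1.eigenvalues) *
      (star h.1.eigenvectorUnitary : Matrix n n ℂ)).trace = ∑ k, ((Real.sqrt (h.1.eigenvalues k) : ℝ) : ℂ) := by
  rw [trace_mul_comm, ← Matrix.mul_assoc,
    Unitary.coe_star_mul_self h.1.eigenvectorUnitary, one_mul, trace_diagonal]
  rfl

lemma aux_trace_pow {n : Type*} [Fintype n] [DecidableEq n] {M : Matrix n n ℂ}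
    (h : M.IsHermitian) (m : ℕ) :
    (M ^ m).trace = ∑ k, ((h.eigenvalues k : ℝ) : ℂ) ^ m := by
  set U : Matrix n n ℂ := (h.eigenvectorUnitary : Matrix n n ℂ) with hUdef
  have hU1 : star U * U = 1 := Unitary.coe_star_mul_self h.eigenvectorUnitary
  set D : Matrix n n ℂ := diagonal (RCLike.ofReal ∘ h.eigenvalues) with hDdef
  have hspec : M = U * D * star U := by
    have := h.spectral_theorem
    rwa [Unitary.conjStarAlgAut_apply] at this
  have key : ∀ m : ℕ, M ^ m = U * D ^ m * star U := by
    intro m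
    induction m with
    | zero =>
      rw [pow_zero, pow_zero, Matrix.mul_one]
      exact (Unitary.coe_mul_star_self h.eigenvectorUnitary).symm
    | succ m ih =>
      rw [pow_succ, ih, hspec, pow_succ]
      calc U * D ^ m * star U * (U * D * star U)
          = U * D ^ m * (star U * U) * D * star U := by simp only [Matrix.mul_assoc]
        _ = U * (D ^ m * D) * star U := by rw [hU1, Matrix.mul_one]; simp only [Matrix.mul_assoc]
  rw [key, trace_mul_comm, ← Matrix.mul_assoc, hU1, one_mul, hDdef, diagonal_pow, trace_diagonal]
  rfl

lemma aux_trace_aeval {n : Type*} [Fintype n] [DecidableEq n] {M : Matrix n n ℂ}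
    (h : M.IsHermitian) (q : Polynomial ℝ) :
    (Polynomial.aeval M (q.map (algebraMap ℝ ℂ))).trace
      = ∑ k, ((q.eval (h.eigenvalues k) : ℝ) : ℂ) := by
  set Q := q.map (algebraMap ℝ ℂ) with hQ
  have hdeg : Q.natDegree < q.natDegree + 1 :=
    lt_of_le_of_lt Polynomial.natDegree_map_le (Nat.lt_succ_self _)
  rw [Polynomial.aeval_eq_sum_range' hdeg]
  rw [trace_sum]
  have hterm : ∀ i, (Q.coeff i • M ^ i).trace
      = ∑ k, ((q.coeff i : ℝ) : ℂ) * ((h.eigenvalues k : ℝ) : ℂ) ^ i := by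
    intro i
    rw [trace_smul, aux_trace_pow h, smul_eq_mul, Finset.mul_sum, hQ, Polynomial.coeff_map]
    rfl
  rw [Finset.sum_congr rfl fun i _ => hterm i, Finset.sum_comm]
  refine Finset.sum_congr rfl fun k _ => ?_
  rw [Polynomial.eval_eq_sum_range' (Nat.lt_succ_self q.natDegree) (h.eigenvalues k),
    Complex.ofReal_sum]
  exact Finset.sum_congr rfl fun i _ => by push_cast; ring

lemma aux_pow_cross {d n : Type*} [Fintype d] [Fintype n] [DecidableEq d] [DecidableEq n]
    (C : Matrix d n ℂ) (i : ℕ) :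
    (Cᴴ * C) ^ (i + 1) = Cᴴ * (C * Cᴴ) ^ i * C := by
  induction i with
  | zero => rw [pow_one, pow_zero, Matrix.mul_one]
  | succ i ih =>
    rw [pow_succ, ih, pow_succ]
    simp only [Matrix.mul_assoc]

lemma aux_trace_aeval_comm {d n : Type*} [Fintype d] [Fintype n] [DecidableEq d] [DecidableEq n]
    (C : Matrix d n ℂ) (Q : Polynomial ℂ) (h0 : Q.coeff 0 = 0) :
    (Polynomial.aeval (Cᴴ * C) Q).trace = (Polynomial.aeval (C * Cᴴ) Q).trace := by
  rw [Polynomial.aeval_eq_sum_range' (Nat.lt_succ_self Q.natDegree),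
    Polynomial.aeval_eq_sum_range' (Nat.lt_succ_self Q.natDegree), trace_sum, trace_sum]
  refine Finset.sum_congr rfl fun i _ => ?_
  match i with
  | 0 => rw [h0, zero_smul, zero_smul, trace_zero, trace_zero]
  | (i + 1) =>
    rw [trace_smul, trace_smul, aux_pow_cross, trace_mul_comm, ← Matrix.mul_assoc, ← pow_succ']

/-- Sums of square roots of eigenvalues of `CᴴC` and `CCᴴ` agree. -/
lemma aux_sum_sqrt_eig_comm {d n : Type*} [Fintype d] [Fintype n] [DecidableEq d] [DecidableEq n]
    (C : Matrix d n ℂ) :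
    ∑ k, Real.sqrt ((Matrix.isHermitian_conjTranspose_mul_self C).eigenvalues k)
      = ∑ k, Real.sqrt ((Matrix.isHermitian_mul_conjTranspose_self C).eigenvalues k) := by
  classical
  set h1 := Matrix.isHermitian_conjTranspose_mul_self C
  set h2 := Matrix.isHermitian_mul_conjTranspose_self C
  set s : Finset ℝ := (Finset.univ.image h1.eigenvalues ∪ Finset.univ.image h2.eigenvalues)
      ∪ {0} with hs
  set q : Polynomial ℝ := Lagrange.interpolate s id Real.sqrt with hq
  have hinj : Set.InjOn id (s : Set ℝ) := Function.injective_id.injOn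
  have hnode : ∀ x ∈ s, q.eval x = Real.sqrt x := fun x hx =>
    Lagrange.eval_interpolate_at_node Real.sqrt hinj hx
  have h00 : q.coeff 0 = 0 := by
    rw [Polynomial.coeff_zero_eq_eval_zero, hnode 0 (by simp [hs]), Real.sqrt_zero]
  have hQ0 : (q.map (algebraMap ℝ ℂ)).coeff 0 = 0 := by
    rw [Polynomial.coeff_map, h00, map_zero]
  have e1 : ∀ k, q.eval (h1.eigenvalues k) = Real.sqrt (h1.eigenvalues k) := fun k =>
    hnode _ (by simp [hs])
  have e2 : ∀ k, q.eval (h2.eigenvalues k) = Real.sqrt (h2.eigenvalues k) := fun k =>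
    hnode _ (by simp [hs])
  have key := aux_trace_aeval_comm C (q.map (algebraMap ℝ ℂ)) hQ0
  rw [aux_trace_aeval h1 q, aux_trace_aeval h2 q] at key
  simp only [e1, e2, ← Complex.ofReal_sum] at key
  exact_mod_cast key

lemma aux_eig_sum_congr {m : Type*} [Fintype m] [DecidableEq m] {M N : Matrix m m ℂ}
    (h : M = N) (hM : M.IsHermitian) (hN : N.IsHermitian) :
    ∑ k, Real.sqrt (hM.eigenvalues k) = ∑ k, Real.sqrt (hN.eigenvalues k) := by
  subst h
  rfl

/-- Every nonzero complex number has a "phase" square root aligning it with its modulus. -/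
lemma aux_phase_exists (c : ℂ) :
    ∃ w : ℂ, w ^ 2 * c = (‖c‖ : ℂ) ∧ w * star w = 1 := by
  by_cases h0 : c = 0
  · exact ⟨1, by simp [h0], by norm_num⟩
  · obtain ⟨w, hw⟩ := IsAlgClosed.exists_pow_nat_eq (k := ℂ)
      ((starRingEnd ℂ) c / (‖c‖ : ℂ)) (n := 2) two_pos
    have hcne : (‖c‖ : ℝ) ≠ 0 := norm_ne_zero_iff.mpr h0
    have habs : ‖w‖ = 1 := by
      have h1 : ‖w‖ ^ 2 = 1 := by
        rw [← norm_pow, hw, norm_div, Complex.norm_conj, Complex.norm_real, Real.norm_eq_abs,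
          abs_of_nonneg (norm_nonneg c)]
        exact div_self hcne
      calc ‖w‖ = Real.sqrt (‖w‖ ^ 2) :=
            (Real.sqrt_sq (norm_nonneg w)).symm
        _ = 1 := by rw [h1, Real.sqrt_one]
    refine ⟨w, ?_, ?_⟩
    · rw [hw, div_mul_eq_mul_div, Complex.conj_mul']
      rw [div_eq_iff (by exact_mod_cast hcne : (‖c‖ : ℂ) ≠ 0)]
      ring
    · rw [Complex.star_def, Complex.mul_conj, Complex.normSq_eq_norm_sq, habs]
      norm_num

/-- for any pure-state decomposition of ρ,
Σ_j p_j |⟨ψ_j*,ψ_j⟩| ≤ √F(ρ,ρᵀ). -/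
theorem decomposition_rootfid_bound {d n : ℕ}
    (ρ : Matrix (Fin d) (Fin d) ℂ) (hρ : IsDensity ρ)
    (p : Fin n → ℝ) (ψ : Fin n → Fin d → ℂ)
    (hp : ∀ j, 0 ≤ p j) (hp1 : ∑ j, p j = 1)
    (hunit : ∀ j, hinner (ψ j) (ψ j) = 1)
    (hdec : ρ = ∑ j, (p j : ℂ) • Matrix.vecMulVec (ψ j) (cconj (ψ j))) :
    ∑ j, p j * ‖hinner (cconj (ψ j)) (ψ j)‖ ≤ rootFid ρ ρᵀ := by
  classical
  have hρp : ρ.PosSemidef := hρ.1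
  have hσp : (ρᵀ).PosSemidef := hρp.transpose
  set R := msqrt ρ with hRdef
  have hRexp : R = (hρp.1.eigenvectorUnitary : Matrix (Fin d) (Fin d) ℂ) *
      diagonal ((↑) ∘ Real.sqrt ∘ hρp.1.eigenvalues) *
      (star hρp.1.eigenvectorUnitary : Matrix (Fin d) (Fin d) ℂ) := by
    rw [hRdef, msqrt, dif_pos hρp]
  have hRps : R.PosSemidef := by
    rw [hRexp]
    have hD : (diagonal ((↑) ∘ Real.sqrt ∘ hρp.1.eigenvalues : Fin d → ℂ)).PosSemidef := by
      rw [posSemidef_diagonal_iff]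
      intro i
      simp only [Function.comp_apply]
      exact_mod_cast Real.sqrt_nonneg _
    have := hD.mul_mul_conjTranspose_same (hρp.1.eigenvectorUnitary : Matrix (Fin d) (Fin d) ℂ)
    rwa [← star_eq_conjTranspose] at this
  have hRH : Rᴴ = R := hRps.1
  have hRR : R * R = ρ := by
    rw [hRexp]
    have hU1 : (star hρp.1.eigenvectorUnitary : Matrix (Fin d) (Fin d) ℂ) *
        (hρp.1.eigenvectorUnitary : Matrix (Fin d) (Fin d) ℂ) = 1 :=
      Unitary.coe_star_mul_self hρp.1.eigenvectorUnitary
    have hsp := hρp.1.spectral_theorem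
    rw [Unitary.conjStarAlgAut_apply] at hsp
    conv_rhs => rw [hsp]
    calc _ = (hρp.1.eigenvectorUnitary : Matrix (Fin d) (Fin d) ℂ) *
          (diagonal ((↑) ∘ Real.sqrt ∘ hρp.1.eigenvalues) *
            ((star hρp.1.eigenvectorUnitary : Matrix (Fin d) (Fin d) ℂ) *
              (hρp.1.eigenvectorUnitary : Matrix (Fin d) (Fin d) ℂ)) *
            diagonal ((↑) ∘ Real.sqrt ∘ hρp.1.eigenvalues)) *
          (star hρp.1.eigenvectorUnitary : Matrix (Fin d) (Fin d) ℂ) := by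
          simp only [Matrix.mul_assoc]
      _ = _ := by
        rw [hU1, Matrix.mul_one, diagonal_mul_diagonal]
        congr 2
        apply congrArg diagonal
        funext i
        simp only [Function.comp_apply]
        rw [← Complex.ofReal_mul, Real.mul_self_sqrt (hρp.eigenvalues_nonneg i)]
        rfl
  have hcdef : ∀ j, hinner (cconj (ψ j)) (ψ j) = ∑ i, ψ j i * ψ j i := by
    intro j
    unfold hinner cconj
    exact Finset.sum_congr rfl fun i _ => by rw [star_star]
  -- phase choice
  have hex : ∀ j, ∃ w : ℂ, w ^ 2 * hinner (cconj (ψ j)) (ψ j)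
      = (‖hinner (cconj (ψ j)) (ψ j)‖ : ℂ) ∧ w * star w = 1 :=
    fun j => aux_phase_exists _
  choose u hu using hex
  have hu1 : ∀ j, u j ^ 2 * hinner (cconj (ψ j)) (ψ j)
      = (‖hinner (cconj (ψ j)) (ψ j)‖ : ℂ) := fun j => (hu j).1
  have hu2 : ∀ j, u j * star (u j) = 1 := fun j => (hu j).2
  -- the two "purification" matrices
  set A : Matrix (Fin d) (Fin n) ℂ :=
    Matrix.of fun i j => (Real.sqrt (p j) : ℂ) * u j * ψ j i with hA
  set B : Matrix (Fin d) (Fin n) ℂ :=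
    Matrix.of fun i j => star ((Real.sqrt (p j) : ℂ) * u j * ψ j i) with hB
  have hpp : ∀ j, (Real.sqrt (p j) : ℂ) * (Real.sqrt (p j) : ℂ) = (p j : ℂ) := by
    intro j
    rw [← Complex.ofReal_mul, Real.mul_self_sqrt (hp j)]
  have hF1 : A * Aᴴ = ρ := by
    ext i k
    rw [hdec]
    simp only [hA, mul_apply, conjTranspose_apply, Matrix.sum_apply, Matrix.smul_apply,
      vecMulVec_apply, of_apply, smul_eq_mul]
    refine Finset.sum_congr rfl fun j _ => ?_
    have e1 : ((Real.sqrt (p j) : ℂ) * u j * ψ j i) * star ((Real.sqrt (p j) : ℂ) * u j * ψ j k)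
        = ((Real.sqrt (p j) : ℂ) * (Real.sqrt (p j) : ℂ)) * (u j * star (u j))
          * (ψ j i * star (ψ j k)) := by
      simp only [Complex.star_def, _root_.map_mul, Complex.conj_ofReal]
      ring
    rw [e1, hu2 j, hpp j, mul_one]
    rfl
  have hF2 : B * Bᴴ = ρᵀ := by
    ext i k
    rw [transpose_apply, hdec]
    simp only [hB, mul_apply, conjTranspose_apply, Matrix.sum_apply, Matrix.smul_apply,
      vecMulVec_apply, of_apply, smul_eq_mul, star_star]
    refine Finset.sum_congr rfl fun j _ => ?_
    have e1 : star ((Real.sqrt (p j) : ℂ) * u j * ψ j i) * ((Real.sqrt (p j) : ℂ) * u j * ψ j k)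
        = ((Real.sqrt (p j) : ℂ) * (Real.sqrt (p j) : ℂ)) * (u j * star (u j))
          * (ψ j k * star (ψ j i)) := by
      simp only [Complex.star_def, _root_.map_mul, Complex.conj_ofReal]
      ring
    rw [e1, hu2 j, hpp j, mul_one]
    rfl
  have hF3 : (Aᴴ * B).trace
      = ((∑ j, p j * ‖hinner (cconj (ψ j)) (ψ j)‖ : ℝ) : ℂ) := by
    rw [trace, Complex.ofReal_sum]
    refine Finset.sum_congr rfl fun j _ => ?_
    rw [diag_apply, mul_apply]
    have e1 : ∀ i, Aᴴ j i * B i j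
        = (starRingEnd ℂ) ((((Real.sqrt (p j) : ℂ) * u j * ψ j i) ^ 2)) := by
      intro i
      simp only [hA, hB, conjTranspose_apply, of_apply, Complex.star_def, sq, _root_.map_mul]
    rw [Finset.sum_congr rfl fun i _ => e1 i, ← map_sum]
    have e2 : ∑ i, ((Real.sqrt (p j) : ℂ) * u j * ψ j i) ^ 2
        = (p j : ℂ) * (u j ^ 2 * hinner (cconj (ψ j)) (ψ j)) := by
      rw [hcdef j, Finset.mul_sum]
      rw [← hpp j]
      rw [Finset.mul_sum]
      refine Finset.sum_congr rfl fun i _ => ?_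
      ring
    rw [e2, hu1 j, ← Complex.ofReal_mul]
    rw [Complex.conj_ofReal]
  -- the PSD matrix appearing in the root fidelity
  have hM : (R * ρᵀ * R).PosSemidef := by
    have := hσp.mul_mul_conjTranspose_same R
    rwa [hRH] at this
  have hroot : rootFid ρ ρᵀ = ∑ k, Real.sqrt (hM.1.eigenvalues k) := by
    have h1 : msqrt ρ = R := rfl
    have h2 : msqrt (msqrt ρ * ρᵀ * msqrt ρ) =
        (hM.1.eigenvectorUnitary : Matrix (Fin d) (Fin d) ℂ) *
          diagonal (((↑) : ℝ → ℂ) ∘ Real.sqrt ∘ hM.1.eigenvalues) *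
          (star hM.1.eigenvectorUnitary : Matrix (Fin d) (Fin d) ℂ) := by
      rw [h1, msqrt, dif_pos hM]
    rw [rootFid, h2, aux_trace_sqrt hM, ← Complex.ofReal_sum, Complex.ofReal_re]
  -- matrix identities
  have hXX : (Aᴴ * B)ᴴ * (Aᴴ * B) = (R * B)ᴴ * (R * B) := by
    rw [conjTranspose_mul, conjTranspose_conjTranspose, conjTranspose_mul, hRH]
    calc Bᴴ * A * (Aᴴ * B) = Bᴴ * (A * Aᴴ) * B := by simp only [Matrix.mul_assoc]
      _ = Bᴴ * (R * R) * B := by rw [hF1, hRR]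
      _ = Bᴴ * R * (R * B) := by simp only [Matrix.mul_assoc]
  have hCC : (R * B) * (R * B)ᴴ = R * ρᵀ * R := by
    rw [conjTranspose_mul, hRH]
    calc R * B * (Bᴴ * R) = R * (B * Bᴴ) * R := by simp only [Matrix.mul_assoc]
      _ = R * ρᵀ * R := by rw [hF2]
  -- the chain of (in)equalities
  calc ∑ j, p j * ‖hinner (cconj (ψ j)) (ψ j)‖
      = ((Aᴴ * B).trace).re := by rw [hF3, Complex.ofReal_re]
    _ ≤ ∑ k, Real.sqrt ((posSemidef_conjTranspose_mul_self (Aᴴ * B)).1.eigenvalues k) :=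
        aux_retrace_le _ (posSemidef_conjTranspose_mul_self _)
    _ = ∑ k, Real.sqrt ((Matrix.isHermitian_conjTranspose_mul_self (R * B)).eigenvalues k) :=
        aux_eig_sum_congr hXX _ _
    _ = ∑ k, Real.sqrt ((Matrix.isHermitian_mul_conjTranspose_self (R * B)).eigenvalues k) :=
        aux_sum_sqrt_eig_comm _
    _ = ∑ k, Real.sqrt (hM.1.eigenvalues k) := aux_eig_sum_congr hCC _ _
    _ = rootFid ρ ρᵀ := hroot.symm
end

section
/- Suppose a probabilistic pure-to-pure conversion law P(ψ → φ) = min{ I_g(ψ)/I_g(φ), 1 } holds, where I_g(ψ) = (1 − |⟨ψ*,ψ⟩|)/2. For a density matrix ρ with optimal decomposition ρ = Σ_j p'_j |ψ'_j⟩⟨ψ'_j| achieving I_g(ρ) = Σ_j p'_j I_g(ψ'_j), the purification |ρ⟩ = Σ_j √(p'_j) |ψ'_j⟩ ⊗ |j⟩ (with {|j⟩} the real standard basis of the ancilla) satisfies I_g(|ρ⟩) = I_g(ρ). -/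
open Matrix
open scoped ComplexOrder

/-- for an optimal (conjugate-nonnegative) decomposition of ρ, the standard
purification |ρ⟩ = Σ_j √p'_j |ψ'_j⟩ ⊗ |j⟩ has the same geometric imaginarity as ρ. -/
theorem purification_imaginarity {d m : ℕ}
    (p : Fin m → ℝ) (ψ : Fin m → Fin d → ℂ)
    (hp : ∀ j, 0 ≤ p j) (hp1 : ∑ j, p j = 1)
    (hunit : ∀ j, hinner (ψ j) (ψ j) = 1)
    (ρ : Matrix (Fin d) (Fin d) ℂ) (hρ : IsDensity ρ)
    (hdec : ρ = ∑ j, (p j : ℂ) • Matrix.vecMulVec (ψ j) (cconj (ψ j)))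
    (hopt : ∑ j, p j * ((1 - ‖hinner (cconj (ψ j)) (ψ j)‖) / 2)
      = (1 - rootFid ρ ρᵀ) / 2)
    (hconj : ∀ j, 0 ≤ (hinner (cconj (ψ j)) (ψ j)).re ∧
      (hinner (cconj (ψ j)) (ψ j)).im = 0)
    (Φ : Fin d × Fin m → ℂ)
    (hΦ : Φ = fun x => (Real.sqrt (p x.2) : ℂ) * ψ x.2 x.1) :
    (1 - ‖hinner (cconj Φ) Φ‖) / 2 = (1 - rootFid ρ ρᵀ) / 2 := by
  subst hΦ
  set c : Fin m → ℝ := fun j => (hinner (cconj (ψ j)) (ψ j)).re with hc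
  have hcj : ∀ j, hinner (cconj (ψ j)) (ψ j) = ((c j : ℝ) : ℂ) := by
    intro j
    apply Complex.ext
    · simp [hc]
    · simp [(hconj j).2]
  have key : hinner (cconj fun x : Fin d × Fin m => (Real.sqrt (p x.2) : ℂ) * ψ x.2 x.1)
      (fun x : Fin d × Fin m => (Real.sqrt (p x.2) : ℂ) * ψ x.2 x.1)
      = ((∑ j, p j * c j : ℝ) : ℂ) := by
    unfold hinner cconj
    rw [Fintype.sum_prod_type, Finset.sum_comm]
    push_cast
    refine Finset.sum_congr rfl fun j _ => ?_
    have : ∑ i, star (star ((Real.sqrt (p j) : ℂ) * ψ j i)) *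
        ((Real.sqrt (p j) : ℂ) * ψ j i)
        = ((Real.sqrt (p j) : ℂ) * (Real.sqrt (p j) : ℂ)) *
          ∑ i, star (star (ψ j i)) * ψ j i := by
      rw [Finset.mul_sum]
      exact Finset.sum_congr rfl fun i _ => by simp [star_star]; ring
    rw [this]
    have h1 : ((Real.sqrt (p j) : ℂ) * (Real.sqrt (p j) : ℂ)) = ((p j : ℝ) : ℂ) := by
      rw [← Complex.ofReal_mul, Real.mul_self_sqrt (hp j)]
    have h2 : (∑ i, star (star (ψ j i)) * ψ j i) = ((c j : ℝ) : ℂ) := by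
      have := hcj j
      unfold hinner cconj at this
      exact this
    rw [h1, h2]
  rw [key]
  have habs : ‖((∑ j, p j * c j : ℝ) : ℂ)‖ = ∑ j, p j * c j := by
    rw [Complex.norm_real, Real.norm_eq_abs, abs_of_nonneg]
    exact Finset.sum_nonneg fun j _ => mul_nonneg (hp j) (hconj j).1
  rw [habs, ← hopt]
  have : ∀ j, ‖hinner (cconj (ψ j)) (ψ j)‖ = c j := by
    intro j
    rw [hcj j, Complex.norm_real, Real.norm_eq_abs, abs_of_nonneg (hconj j).1]
  rw [show (∑ j, p j * ((1 - ‖hinner (cconj (ψ j)) (ψ j)‖) / 2))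
      = ∑ j, p j * ((1 - c j) / 2) from Finset.sum_congr rfl fun j _ => by rw [this j]]
  have hsum : ∑ j, p j * ((1 - c j) / 2) = ((∑ j, p j) - ∑ j, p j * c j) / 2 := by
    simp only [← mul_div_assoc]
    rw [← Finset.sum_div]
    congr 1
    rw [← Finset.sum_sub_distrib]
    exact Finset.sum_congr rfl fun j _ => by ring
  rw [hsum, hp1]
end
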